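/- arXiv:2107.09407 — 2 statements merged into one kernel-verified Lean document; each statement's English description precedes it below -/
import Mathlib

section
/- The Blaschke product Bl(z) = (z² + 1/3)/(1 + z²/3) is weakly expanding on the unit circle: for every z with |z| = 1, one has |Bl'(z)| ≥ 1, with equality if and only if z² = 1. -/
open Complex

/-- The parabolic Blaschke product. -/
noncomputable def Bl : ℂ → ℂ := fun z => (z ^ 2 + 1 / 3) / (1 + z ^ 2 / 3)

lemma Bl_hasDerivAt (z : ℂ) (h : (1 : ℂ) + z ^ 2 / 3 ≠ 0) :
    HasDerivAt Bl ((16 / 9) * z / (1 + z ^ 2 / 3) ^ 2) z := by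
  have h1 : HasDerivAt (fun z : ℂ => z ^ 2 + 1 / 3) (2 * z) z := by
    simpa using ((hasDerivAt_pow 2 z).add_const (1/3 : ℂ))
  have h2 : HasDerivAt (fun z : ℂ => 1 + z ^ 2 / 3) (2 * z / 3) z := by
    simpa using (((hasDerivAt_pow 2 z).div_const 3).const_add (1 : ℂ))
  have := h1.div h2 h
  refine HasDerivAt.congr_deriv (f := Bl) this ?_
  rw [div_eq_div_iff (pow_ne_zero 2 h) (pow_ne_zero 2 h)]
  ring

/-- `Bl` is weakly expanding on the unit circle: `|Bl′(z)| ≥ 1` there,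
with equality iff `z² = 1`. -/
theorem Bl_weakly_expanding (z : ℂ) (hz : ‖z‖ = 1) :
    1 ≤ ‖deriv Bl z‖ ∧
    (‖deriv Bl z‖ = 1 ↔ z ^ 2 = 1) := by
  have habs2 : ‖z ^ 2‖ = 1 := by rw [norm_pow, hz]; norm_num
  have hden : (1 : ℂ) + z ^ 2 / 3 ≠ 0 := by
    intro h
    have hzz : z ^ 2 = -3 := by linear_combination 3 * h
    rw [hzz] at habs2
    norm_num at habs2
  have hderiv : deriv Bl z = (16 / 9) * z / (1 + z ^ 2 / 3) ^ 2 :=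
    (Bl_hasDerivAt z hden).deriv
  have h1 : Complex.normSq (z ^ 2) = 1 := by
    rw [← Complex.sq_norm, habs2]; norm_num
  have hns : Complex.normSq (1 + z ^ 2 / 3) = 10 / 9 + (2 / 3) * (z ^ 2).re := by
    rw [Complex.normSq_apply] at h1 ⊢
    simp only [Complex.add_re, Complex.add_im, Complex.one_re, Complex.one_im,
      Complex.div_re, Complex.div_im, Complex.normSq_apply, Complex.re_ofNat,
      Complex.im_ofNat]
    nlinarith [h1]
  have hre_le : (z ^ 2).re ≤ 1 := by
    calc (z ^ 2).re ≤ ‖z ^ 2‖ := Complex.re_le_norm _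
    _ = 1 := habs2
  have hre_ge : -1 ≤ (z ^ 2).re := by
    have := Complex.abs_re_le_norm (z ^ 2)
    rw [habs2] at this
    linarith [abs_le.mp this]
  have habsd : ‖deriv Bl z‖ = (16 / 9) / (10 / 9 + (2 / 3) * (z ^ 2).re) := by
    rw [hderiv, norm_div, norm_mul, norm_pow, hz, Complex.sq_norm, hns]
    norm_num
  have hApos : (0 : ℝ) < 10 / 9 + (2 / 3) * (z ^ 2).re := by linarith
  constructor
  · rw [habsd, le_div_iff₀ hApos]
    linarith
  · rw [habsd]
    constructor
    · intro h
      have hre : (z ^ 2).re = 1 := by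
        rw [div_eq_one_iff_eq hApos.ne'] at h
        linarith
      have him : (z ^ 2).im = 0 := by
        rw [Complex.normSq_apply, hre] at h1
        nlinarith [sq_nonneg (z ^ 2).im]
      exact Complex.ext (by simp [hre]) (by simp [him])
    · intro h
      rw [h]
      norm_num
end

section
/- Let m₂ : ℝ/ℤ → ℝ/ℤ be the doubling map m₂(θ) = 2θ mod 1. For every irreducible rational p/q with q ≥ 1, there exists a q-element cycle {θ₀ < θ₁ < ⋯ < θ_{q-1}} ⊂ ℝ/ℤ of m₂ such that m₂(θ_i) = θ_{(i+p) mod q} for all i (i.e. a cycle of combinatorial rotation number p/q for angle doubling). -/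
open Finset

private lemma dc_geo_sum (n : ℕ) : (∑ j ∈ range n, 2 ^ j) + 1 = 2 ^ n := by
  induction n with
  | zero => simp
  | succ n ih => rw [sum_range_succ, pow_succ]; omega

private lemma dc_weighted_sum (n : ℕ) :
    (∑ j ∈ range n, (n - j) * 2 ^ j) + n + 2 = 2 ^ (n + 1) := by
  induction n with
  | zero => simp
  | succ n ih =>
    have h1 : ∀ j ∈ range (n + 1), (n + 1 - j) * 2 ^ j = (n - j) * 2 ^ j + 2 ^ j := by
      intro j hj
      simp only [mem_range] at hj
      have h : n + 1 - j = (n - j) + 1 := by omega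
      rw [h, add_mul, one_mul]
    rw [sum_congr rfl h1, sum_add_distrib, sum_range_succ (fun j => (n - j) * 2 ^ j),
      Nat.sub_self]
    have hg := dc_geo_sum (n + 1)
    have hp : (2:ℕ) ^ (n + 1 + 1) = 2 ^ (n + 1) * 2 := pow_succ 2 (n+1)
    omega

/-- The numerator of the `r`-th cycle point: `θ r = Nval p q r / (2^q - 1)`. -/
private def Nval (p q r : ℕ) : ℕ :=
  p % q + ∑ j ∈ range (q - 1), ((r + (q - 1 - j) * (p % q)) / q) * 2 ^ j

private lemma dc_nval_rel (p q r : ℕ) (hq : 0 < q) (hr : r < q) :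
    2 * Nval p q r + (r + p % q) / q
      = Nval p q ((r + p % q) % q) + ((r + p % q) / q) * 2 ^ q := by
  set P := p % q with hP
  set k := (r + P) / q with hk
  set r' := (r + P) % q with hr'
  have hrq : r / q = 0 := Nat.div_eq_of_lt hr
  have hr'q : r' < q := Nat.mod_lt _ hq
  have hdm : q * k + r' = r + P := Nat.div_add_mod (r + P) q
  -- key shift identity
  have hF : ∀ m : ℕ, (r + (m + 1) * P) / q = (r' + m * P) / q + k := by
    intro m
    have h1 : r + (m + 1) * P = (r' + m * P) + q * k := by
      have : (m + 1) * P = m * P + P := by ring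
      omega
    rw [h1, Nat.add_mul_div_left _ _ hq]
  have hg : (r' + (q - 1) * P) / q + k = P := by
    rw [← hF (q - 1)]
    have h2 : ((q - 1) + 1) * P = q * P := by congr 1; omega
    rw [h2, Nat.add_mul_div_left _ _ hq, hrq, zero_add]
  rcases Nat.lt_or_ge q 2 with hq1 | hq2
  · -- q = 1
    interval_cases q
    simp [Nval, Nat.mod_one] at *
    omega
  · obtain ⟨n, rfl⟩ : ∃ n, q = n + 2 := ⟨q - 2, by omega⟩
    have hrange : (n + 2) - 1 = n + 1 := by omega
    simp only [Nval, ← hP, hrange]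
    -- rewrite the sum for r using hF
    have hA : ∀ j ∈ range (n + 1),
        ((r + (n + 1 - j) * P) / (n + 2)) * 2 ^ j
          = ((r' + (n - j) * P) / (n + 2)) * 2 ^ j + k * 2 ^ j := by
      intro j hj
      simp only [mem_range] at hj
      have h : n + 1 - j = (n - j) + 1 := by omega
      rw [h, hF (n - j), add_mul]
    rw [sum_congr rfl hA, sum_add_distrib, ← mul_sum]
    -- split sums
    have hB : ∑ j ∈ range (n + 1), ((r' + (n + 1 - j) * P) / (n + 2)) * 2 ^ j
        = (∑ j ∈ range n, ((r' + (n - j) * P) / (n + 2)) * 2 ^ (j + 1))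
          + ((r' + (n + 1) * P) / (n + 2)) * 2 ^ 0 := by
      rw [sum_range_succ' (fun j => ((r' + (n + 1 - j) * P) / (n + 2)) * 2 ^ j) n]
      congr 1
      · apply sum_congr rfl; intro j hj
        simp only [mem_range] at hj
        have h : n + 1 - (j + 1) = n - j := by omega
        rw [h]
    have hC : ∑ j ∈ range (n + 1), ((r' + (n - j) * P) / (n + 2)) * 2 ^ j
        = (∑ j ∈ range n, ((r' + (n - j) * P) / (n + 2)) * 2 ^ j)
          + ((r' + 0 * P) / (n + 2)) * 2 ^ n := by
      rw [sum_range_succ, Nat.sub_self]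
    have hzero : (r' + 0 * P) / (n + 2) = 0 := by
      apply Nat.div_eq_of_lt; omega
    have hdouble : ∑ j ∈ range n, ((r' + (n - j) * P) / (n + 2)) * 2 ^ (j + 1)
        = 2 * ∑ j ∈ range n, ((r' + (n - j) * P) / (n + 2)) * 2 ^ j := by
      rw [mul_sum]
      apply sum_congr rfl; intro j hj
      rw [pow_succ]; ring
    rw [hB, hC, hzero, hdouble]
    have hgeo := dc_geo_sum (n + 1)
    have hgq : (r' + (n + 1) * P) / (n + 2) + k = P := by
      have : (n + 2) - 1 = n + 1 := by omega
      rwa [this] at hg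
    have hpow : (2:ℕ) ^ (n + 2) = 2 ^ (n + 1) * 2 := pow_succ 2 (n + 1)
    set A := ∑ j ∈ range n, ((r' + (n - j) * P) / (n + 2)) * 2 ^ j
    set S := ∑ j ∈ range (n + 1), (2:ℕ) ^ j
    set g := (r' + (n + 1) * P) / (n + 2)
    -- goal: 2 * (P + (A + 0 + k * S)) + k = (P + (2 * A + g * 2 ^ 0)) + k * 2 ^ (n + 2)
    zify at hgeo hgq hpow ⊢
    nlinarith [hgeo, hgq, hpow]

private lemma dc_nval_le (p q r : ℕ) (hq : 0 < q) (hr : r < q) :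
    Nval p q r + 2 ≤ 2 ^ q := by
  have hPlt : p % q < q := Nat.mod_lt _ hq
  have hterm : ∀ j ∈ range (q - 1),
      ((r + (q - 1 - j) * (p % q)) / q) * 2 ^ j ≤ (q - 1 - j) * 2 ^ j := by
    intro j hj
    simp only [mem_range] at hj
    apply Nat.mul_le_mul_right
    set a := q - 1 - j with ha
    have h1 : a * (p % q) + a ≤ a * q := by
      have h2 : a * (p % q) + a ≤ a * ((q - 1) + 1) := by
        have := Nat.mul_le_mul_left a (show p % q ≤ q - 1 by omega)
        calc a * (p % q) + a ≤ a * (q - 1) + a := by omega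
          _ = a * ((q - 1) + 1) := by ring
      have h3 : (q - 1) + 1 = q := by omega
      rwa [h3] at h2
    have h4 : r + a * (p % q) < (a + 1) * q := by
      have : (a + 1) * q = a * q + q := by ring
      omega
    have h5 : (r + a * (p % q)) / q < a + 1 := by
      rw [Nat.div_lt_iff_lt_mul hq]
      calc r + a * (p % q) < (a + 1) * q := h4
        _ = (a + 1) * q := rfl
    omega
  have hsum := sum_le_sum hterm
  have hw := dc_weighted_sum (q - 1)
  have hq1 : (q - 1) + 1 = q := by omega
  rw [hq1] at hw
  unfold Nval
  omega

private lemma dc_nval_adj (p q r : ℕ) (hq : 2 ≤ q) (hpq : Nat.Coprime p q)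
    (hr : r + 1 < q) : Nval p q r < Nval p q (r + 1) := by
  have hq0 : 0 < q := by omega
  have hP : Nat.Coprime (p % q) q := by
    have h := hpq.symm
    rwa [Nat.Coprime, Nat.gcd_rec] at h
  haveI : NeZero q := ⟨by omega⟩
  set P := p % q with hPdef
  -- find m₀ with (r + m₀ * P) % q = q - 1
  set u := ZMod.unitOfCoprime P hP with hu
  set m₀ := ((((q - 1 - r : ℕ) : ZMod q)) * ↑u⁻¹).val with hm₀
  have hm₀lt : m₀ < q := ZMod.val_lt _
  have hsolve : (r + m₀ * P) % q = q - 1 := by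
    have h1 : ((m₀ : ℕ) : ZMod q) = (((q - 1 - r : ℕ) : ZMod q)) * ↑u⁻¹ :=
      ZMod.natCast_zmod_val _
    have h2 : ((r + m₀ * P : ℕ) : ZMod q) = ((q - 1 : ℕ) : ZMod q) := by
      push_cast
      rw [h1, mul_assoc]
      have h3 : (↑u⁻¹ : ZMod q) * (P : ZMod q) = 1 := by
        rw [← ZMod.coe_unitOfCoprime P hP, ← hu, ← Units.val_mul, inv_mul_cancel,
          Units.val_one]
      rw [h3, mul_one, ← Nat.cast_add]
      congr 1
      omega
    have h4 := (ZMod.natCast_eq_natCast_iff' _ _ _).mp h2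
    rwa [Nat.mod_eq_of_lt (by omega : q - 1 < q)] at h4
  have hm₀pos : 0 < m₀ := by
    rcases Nat.eq_zero_or_pos m₀ with h | h
    · exfalso
      rw [h] at hsolve
      simp at hsolve
      rw [Nat.mod_eq_of_lt (by omega : r < q)] at hsolve
      omega
    · exact h
  -- compare the sums
  unfold Nval
  have hj₀ : q - 1 - m₀ ∈ range (q - 1) := by
    simp only [mem_range]; omega
  apply Nat.add_lt_add_left
  apply sum_lt_sum
  · intro j hj
    apply Nat.mul_le_mul_right
    apply Nat.div_le_div_right
    omega
  · refine ⟨q - 1 - m₀, hj₀, ?_⟩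
    have hm : q - 1 - (q - 1 - m₀) = m₀ := by omega
    rw [hm]
    set a := r + m₀ * P with ha
    have hnext : r + 1 + m₀ * P = a + 1 := by omega
    rw [hnext]
    have hdiv : (a + 1) / q = a / q + 1 := by
      have h1 : q * (a / q) + (q - 1) = a := by
        have := Nat.div_add_mod a q
        omega
      have h2 : a + 1 = q * (a / q + 1) := by
        rw [Nat.mul_add, mul_one]; omega
      rw [h2, Nat.mul_div_cancel_left _ hq0]
    have hpow : 0 < 2 ^ (q - 1 - m₀) := by positivity
    have : a / q < (a + 1) / q := by omega
    exact Nat.mul_lt_mul_of_lt_of_le this (le_refl _) hpow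

private lemma dc_nval_mono (p q : ℕ) (hq : 2 ≤ q) (hpq : Nat.Coprime p q) :
    ∀ t, t < q → ∀ s, s < t → Nval p q s < Nval p q t := by
  intro t
  induction t with
  | zero => intro _ s hs; omega
  | succ t ih =>
    intro ht s hs
    rcases Nat.lt_or_ge s t with h | h
    · exact lt_trans (ih (by omega) s h) (dc_nval_adj p q t hq hpq ht)
    · have : s = t := by omega
      subst this
      exact dc_nval_adj p q s hq hpq ht

/-- For every irreducible `p/q` there is a `q`-cycle of the angle-doubling map
`m₂(θ) = 2θ mod 1` with combinatorial rotation number `p/q`: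
angles `θ₀ < θ₁ < ⋯ < θ_{q-1}` in `[0,1)` with `2·θ i ≡ θ ((i+p) mod q) (mod 1)`. -/
theorem exists_doubling_cycle_rotation_number (p q : ℕ) (hq : 0 < q)
    (hpq : Nat.Coprime p q) :
    ∃ θ : Fin q → ℝ,
      StrictMono θ ∧
      (∀ i, θ i ∈ Set.Ico (0 : ℝ) 1) ∧
      (∀ i : Fin q, ∃ k : ℤ,
        2 * θ i = θ ⟨(i.1 + p) % q, Nat.mod_lt _ hq⟩ + k) := by
  have hD : (0:ℝ) < 2 ^ q - 1 := by
    have h1 : (2:ℝ) ^ 1 ≤ 2 ^ q := by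
      apply pow_le_pow_right₀ (by norm_num) hq
    simp at h1
    linarith
  refine ⟨fun i => (Nval p q i.1 : ℝ) / (2 ^ q - 1), ?_, ?_, ?_⟩
  · intro i j hij
    have hij' : i.1 < j.1 := hij
    have hq2 : 2 ≤ q := by have := j.isLt; omega
    have hN : Nval p q i.1 < Nval p q j.1 :=
      dc_nval_mono p q hq2 hpq j.1 j.isLt i.1 hij'
    apply div_lt_div_of_pos_right _ hD
    exact_mod_cast hN
  · intro i
    constructor
    · positivity
    · rw [div_lt_one hD]
      have := dc_nval_le p q i.1 hq i.isLt
      have h2 : (Nval p q i.1 : ℝ) + 2 ≤ 2 ^ q := by exact_mod_cast this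
      linarith
  · intro i
    refine ⟨((i.1 + p % q) / q : ℕ), ?_⟩
    have hidx : (i.1 + p) % q = (i.1 + p % q) % q := by
      conv_lhs => rw [Nat.add_mod]
      rw [Nat.mod_eq_of_lt i.isLt]
    have hrel := dc_nval_rel p q i.1 hq i.isLt
    show 2 * ((Nval p q i.1 : ℝ) / (2 ^ q - 1))
      = (Nval p q ((i.1 + p) % q) : ℝ) / (2 ^ q - 1) + (((i.1 + p % q) / q : ℕ) : ℤ)
    have hcast : 2 * (Nval p q i.1 : ℝ) + ((i.1 + p % q) / q : ℕ)
        = (Nval p q ((i.1 + p % q) % q) : ℝ) + (((i.1 + p % q) / q : ℕ)) * 2 ^ q := by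
      exact_mod_cast congrArg (Nat.cast : ℕ → ℝ) hrel
    rw [← hidx] at hcast
    have hne : (2:ℝ) ^ q - 1 ≠ 0 := ne_of_gt hD
    rw [Int.cast_natCast]
    field_simp
    linear_combination hcast
end
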